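/- Fix s ≥ 1 and let a_s be the meta-Fibonacci sequence (a_s(n)=1 for 0 ≤ n ≤ s+1, a_s(s+2)=2, a_s(n)=a_s(n-s-a_s(n-1))+a_s(n-s-1-a_s(n-2)) for n>s+2). Then a_s(n) equals the number of compositions n = x_0 + x_1 + ⋯ + x_k (k ≥ 0 arbitrary) where x_0 ∈ {1, 2, …, s} and for each i ≥ 1, x_i ∈ {s, 2^i + s - 1}. -/

import Mathlib

namespace MetaFib


def ms : ℕ → ℕ
  | 0 => 0
  | b+1 => ms ((b+1)/2) + (b+1)
decreasing_by exact Nat.div_lt_self (Nat.succ_pos b) one_lt_two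

def pc : ℕ → ℕ
  | 0 => 0
  | b+1 => pc ((b+1)/2) + (b+1) % 2
decreasing_by exact Nat.div_lt_self (Nat.succ_pos b) one_lt_two

def sz : ℕ → ℕ
  | 0 => 0
  | b+1 => sz ((b+1)/2) + 1
decreasing_by exact Nat.div_lt_self (Nat.succ_pos b) one_lt_two

def phi (s b : ℕ) : ℕ := ms b + s * sz b

lemma ms_rec {b : ℕ} (hb : 1 ≤ b) : ms b = ms (b/2) + b := by
  cases b with
  | zero => omega
  | succ b => rw [ms]

lemma pc_rec {b : ℕ} (hb : 1 ≤ b) : pc b = pc (b/2) + b % 2 := by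
  cases b with
  | zero => omega
  | succ b => rw [pc]

lemma sz_rec {b : ℕ} (hb : 1 ≤ b) : sz b = sz (b/2) + 1 := by
  cases b with
  | zero => omega
  | succ b => rw [sz]

lemma phi_rec (s : ℕ) {b : ℕ} (hb : 1 ≤ b) : phi s b = phi s (b/2) + b + s := by
  unfold phi; rw [ms_rec hb, sz_rec hb]; ring

lemma ms_le (b : ℕ) : b ≤ ms b := by
  cases b with
  | zero => simp [ms]
  | succ b => rw [ms]; omega

lemma phi_ge (s b : ℕ) : b ≤ phi s b := le_trans (ms_le b) (Nat.le_add_right _ _)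

lemma sz_pos {b : ℕ} (hb : 1 ≤ b) : 1 ≤ sz b := by rw [sz_rec hb]; omega

lemma phi_ge' (s : ℕ) {b : ℕ} (hb : 1 ≤ b) : b + s ≤ phi s b := by
  have h1 := ms_le b
  have h2 := sz_pos hb
  have : s * 1 ≤ s * sz b := Nat.mul_le_mul_left s h2
  unfold phi; omega

lemma phi_zero (s : ℕ) : phi s 0 = 0 := by simp [phi, ms, sz]
lemma ms_one : ms 1 = 1 := by rw [ms]; norm_num [ms]
lemma sz_one : sz 1 = 1 := by rw [sz]; norm_num [sz]
lemma phi_one (s : ℕ) : phi s 1 = 1 + s := by simp [phi, ms_one, sz_one, Nat.mul_one]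
lemma phi_two (s : ℕ) : phi s 2 = 3 + 2 * s := by
  rw [phi_rec s (by norm_num : (1:ℕ) ≤ 2)]
  norm_num [phi_one]; omega

lemma phi_lt_succ (s : ℕ) : ∀ b, phi s b < phi s (b+1) := by
  intro b
  induction b using Nat.strong_induction_on with
  | _ b ih =>
    cases b with
    | zero => rw [phi_zero, phi_one]; omega
    | succ b =>
      have mono : ∀ y, y ≤ b + 1 → ∀ x, x ≤ y → phi s x ≤ phi s y := by
        intro y
        induction y with
        | zero => intro _ x hx; interval_cases x; rfl
        | succ y ihy =>
          intro hy x hx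
          rcases Nat.lt_succ_iff_lt_or_eq.mp (Nat.lt_succ_of_le hx) with h | h
          · exact le_trans (ihy (by omega) x (by omega)) (le_of_lt (ih y (by omega)))
          · rw [h]
      rw [phi_rec s (by omega : 1 ≤ b + 1), phi_rec s (by omega : 1 ≤ b + 2)]
      have h1 : (b+1)/2 ≤ (b+2)/2 := by omega
      have h2 : (b+2)/2 ≤ b + 1 := by omega
      have := mono ((b+2)/2) h2 ((b+1)/2) h1
      omega

lemma phi_mono (s : ℕ) : StrictMono (phi s) := strictMono_nat_of_lt_succ (phi_lt_succ s)

def psi (s c : ℕ) : ℕ := phi s c + 2 * c + s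

lemma psi_ge (s c : ℕ) : c ≤ psi s c := by have := phi_ge s c; unfold psi; omega

lemma psi_mono (s : ℕ) : StrictMono (psi s) := by
  intro x y h
  have := phi_mono s h
  unfold psi; omega

lemma phi_two_mul (s : ℕ) {c : ℕ} (hc : 1 ≤ c) : phi s (2*c) = psi s c := by
  rw [phi_rec s (by omega : 1 ≤ 2*c)]
  have : 2*c/2 = c := by omega
  rw [this]; unfold psi; ring

lemma phi_two_mul_add_one (s c : ℕ) : phi s (2*c+1) = psi s c + 1 := by
  rw [phi_rec s (by omega : 1 ≤ 2*c+1)]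
  have : (2*c+1)/2 = c := by omega
  rw [this]; unfold psi; ring


def invf (f : ℕ → ℕ) (hf : ∀ x, x ≤ f x) (n : ℕ) : ℕ := Nat.find (⟨n, hf n⟩ : ∃ b, n ≤ f b)

lemma lt_invf_iff {f : ℕ → ℕ} {hf : ∀ x, x ≤ f x} (hm : Monotone f) {b n : ℕ} :
    b < invf f hf n ↔ f b < n := by
  constructor
  · intro h
    have := Nat.find_min (⟨n, hf n⟩ : ∃ b, n ≤ f b) h
    omega
  · intro h
    rw [invf, Nat.lt_find_iff]
    intro m hm' hc
    exact absurd (le_trans hc (hm hm')) (by omega)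

lemma invf_eq {f : ℕ → ℕ} {hf : ∀ x, x ≤ f x} (hm : Monotone f) {n N : ℕ} (hN : 1 ≤ N)
    (h1 : f (N-1) < n) (h2 : n ≤ f N) : invf f hf n = N := by
  have hA : N - 1 < invf f hf n := (lt_invf_iff hm).mpr h1
  have hB : ¬ (N < invf f hf n) := by rw [lt_invf_iff hm]; omega
  omega

def seqA (s n : ℕ) : ℕ := invf (phi s) (phi_ge s) n
def seqB (s n : ℕ) : ℕ := invf (psi s) (psi_ge s) n

lemma lt_seqA_iff {s b n : ℕ} : b < seqA s n ↔ phi s b < n := lt_invf_iff (phi_mono s).monotone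
lemma lt_seqB_iff {s b n : ℕ} : b < seqB s n ↔ psi s b < n := lt_invf_iff (psi_mono s).monotone

lemma seqA_pos {s n : ℕ} (hn : 1 ≤ n) : 1 ≤ seqA s n :=
  lt_seqA_iff.mpr (by rw [phi_zero]; omega)

lemma seqA_split (s : ℕ) {n : ℕ} (hn : s + 1 ≤ n) :
    seqA s n = seqB s n + seqB s (n-1) := by
  set u := seqB s n with hu
  set v := seqB s (n-1) with hv
  have hu1 : 1 ≤ u := lt_seqB_iff.mpr (by unfold psi; rw [phi_zero]; omega)
  have hvu : v ≤ u := by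
    by_contra h
    have h1 : psi s u < n - 1 := lt_seqB_iff.mp (by omega)
    have h2 : ¬ (psi s u < n) := by rw [← lt_seqB_iff]; omega
    omega
  have huv : u ≤ v + 1 := by
    by_contra h
    have h1 : psi s (v+1) < n := lt_seqB_iff.mp (by omega)
    have h2 : psi s v < psi s (v+1) := psi_mono s (by omega)
    have h3 : ¬ (psi s v < n - 1) := by rw [← lt_seqB_iff]; omega
    omega
  have hvn : ¬ (psi s v < n - 1) := by rw [← lt_seqB_iff]; omega
  rcases (by omega : u = v + 1 ∨ u = v) with h | h
  · -- N = 2v+1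
    have hfN : n ≤ phi s (2*v+1) := by rw [phi_two_mul_add_one]; omega
    have hfN' : phi s (2*v+1-1) < n := by
      rcases Nat.eq_zero_or_pos v with hv0 | hv0
      · rw [hv0]; simpa [phi_zero] using (by omega : 0 < n)
      · have : 2*v+1-1 = 2*v := by omega
        rw [this, phi_two_mul s hv0]
        have : v < u := by omega
        exact lt_seqB_iff.mp this
    have := invf_eq (hf := phi_ge s) (phi_mono s).monotone (by omega : 1 ≤ 2*v+1) hfN' hfN
    rw [seqA, this]; omega
  · -- N = 2v, v = u ≥ 1
    have hv1 : 1 ≤ v := by omega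
    have hfN : n ≤ phi s (2*v) := by
      rw [phi_two_mul s hv1]
      have : ¬ (psi s v < n) := by rw [← lt_seqB_iff]; omega
      omega
    have hfN' : phi s (2*v-1) < n := by
      have he : 2*v-1 = 2*(v-1)+1 := by omega
      rw [he, phi_two_mul_add_one]
      have : psi s (v-1) < n - 1 := lt_seqB_iff.mp (by omega)
      omega
    have := invf_eq (hf := phi_ge s) (phi_mono s).monotone (by omega : 1 ≤ 2*v) hfN' hfN
    rw [seqA, this]; omega

lemma seqA_le {s m : ℕ} (hm : s + 2 ≤ m) : seqA s (m-1) ≤ m - s - 1 := by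
  set t := seqA s (m-1) with ht
  have ht1 : 1 ≤ t := seqA_pos (by omega)
  rcases (by omega : t = 1 ∨ 2 ≤ t) with h | h
  · omega
  · have h1 : phi s (t-1) < m - 1 := lt_seqA_iff.mp (by omega)
    have h2 := phi_ge' s (by omega : 1 ≤ t - 1)
    omega

lemma seqB_eq (s : ℕ) {m : ℕ} (hm : s + 2 ≤ m) :
    seqB s m = seqA s (m - s - seqA s (m-1)) := by
  set t := seqA s (m-1) with ht
  have ht1 : 1 ≤ t := seqA_pos (by omega)
  have htb : t ≤ m - s - 1 := seqA_le hm
  set C := seqA s (m - s - t) with hC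
  have hC1 : 1 ≤ C := seqA_pos (by omega)
  have hCphi : m - s - t ≤ phi s C := by
    have : ¬ (phi s C < m - s - t) := by rw [← lt_seqA_iff]; omega
    omega
  have hCphi' : phi s (C-1) < m - s - t := lt_seqA_iff.mp (by omega)
  have hphit : m - 1 ≤ phi s t := by
    have : ¬ (phi s t < m - 1) := by rw [← lt_seqA_iff]; omega
    omega
  -- Sub-claim a : C ≤ t/2 + 1
  have ha : C ≤ t/2 + 1 := by
    by_contra h
    have h1 : phi s (t/2+1) < m - s - t := lt_seqA_iff.mp (by omega)
    have h2 : phi s t = phi s (t/2) + t + s := phi_rec s ht1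
    have h3 : phi s (t/2) < phi s (t/2+1) := phi_mono s (by omega)
    omega
  -- Sub-claim b : t ≤ 2*C
  have hb : t ≤ 2*C := by
    rcases (by omega : t = 1 ∨ 2 ≤ t) with h | h
    · omega
    · have h1 : phi s (t-1) < m - 1 := lt_seqA_iff.mp (by omega)
      have h2 : phi s (t-1) = phi s ((t-1)/2) + (t-1) + s := phi_rec s (by omega)
      have h3 : phi s ((t-1)/2) < m - s - t := by omega
      have h4 : (t-1)/2 < C := lt_seqA_iff.mpr h3
      omega
  have hpsiC : m ≤ psi s C := by unfold psi; omega
  have hpsiC' : psi s (C-1) < m := by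
    have h2 : phi s (C-1) + 1 ≤ m - s - t := by omega
    unfold psi; omega
  exact invf_eq (psi_mono s).monotone hC1 hpsiC' hpsiC

lemma seqA_init (s : ℕ) {n : ℕ} (h1 : 1 ≤ n) (h2 : n ≤ s + 1) : seqA s n = 1 := by
  apply invf_eq (phi_mono s).monotone le_rfl
  · simp [phi_zero]; omega
  · rw [phi_one]; omega

lemma seqA_two_val (s : ℕ) : seqA s (s+2) = 2 := by
  apply invf_eq (phi_mono s).monotone (by omega)
  · rw [(by rfl : (2:ℕ)-1 = 1), phi_one]; omega
  · rw [phi_two]; omega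

lemma seqA_rec (s : ℕ) {n : ℕ} (hn : s + 3 ≤ n) :
    seqA s n = seqA s (n - s - seqA s (n-1)) + seqA s (n - s - 1 - seqA s (n-2)) := by
  rw [seqA_split s (by omega : s + 1 ≤ n), seqB_eq s (by omega : s + 2 ≤ n),
    seqB_eq s (by omega : s + 2 ≤ n - 1)]
  have h2 : n - 1 - 1 = n - 2 := by omega
  rw [h2]
  have h3 : n - 1 - s - seqA s (n-2) = n - s - 1 - seqA s (n-2) := by omega
  rw [h3]
lemma pow_div_two {k : ℕ} (hk : 1 ≤ k) : 2^k = 2 * 2^(k-1) := by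
  cases k with
  | zero => omega
  | succ k => rw [pow_succ]; simp [Nat.add_sub_cancel]; ring

lemma k_pos_of_lt {b k : ℕ} (hb : 1 ≤ b) (h : b < 2^k) : 1 ≤ k := by
  by_contra hc
  have : k = 0 := by omega
  rw [this] at h; norm_num at h; omega

lemma sz_le {b : ℕ} : ∀ {k : ℕ}, b < 2^k → sz b ≤ k := by
  induction b using Nat.strong_induction_on with
  | _ b ih =>
    intro k h
    rcases Nat.eq_zero_or_pos b with h0 | h0
    · subst h0; simp [sz]
    · have hk := k_pos_of_lt h0 h
      have hdiv : b/2 < 2^(k-1) := by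
        have := pow_div_two hk; omega
      have := ih (b/2) (by omega) hdiv
      rw [sz_rec h0]; omega

lemma lt_two_pow_sz (b : ℕ) : b < 2^(sz b) := by
  induction b using Nat.strong_induction_on with
  | _ b ih =>
    rcases Nat.eq_zero_or_pos b with h0 | h0
    · subst h0; simp [sz]
    · have := ih (b/2) (by omega)
      rw [sz_rec h0, pow_succ]
      omega

lemma sum_testBit_pow {b : ℕ} : ∀ {k : ℕ}, b < 2^k →
    ∑ j ∈ Finset.range k, (if b.testBit j then 2^(j+1) else 0) = 2*b := by
  induction b using Nat.strong_induction_on with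
  | _ b ih =>
    intro k h
    rcases Nat.eq_zero_or_pos b with h0 | h0
    · subst h0; simp [Nat.zero_testBit]
    · have hk := k_pos_of_lt h0 h
      obtain ⟨k', rfl⟩ : ∃ k', k = k' + 1 := ⟨k - 1, by omega⟩
      rw [Finset.sum_range_succ']
      have hdiv : b/2 < 2^k' := by
        have : (2:ℕ)^(k'+1) = 2*2^k' := by rw [pow_succ]; ring
        omega
      have hrw : ∀ j, (if b.testBit (j+1) then 2^(j+1+1) else 0)
          = 2 * (if (b/2).testBit j then 2^(j+1) else 0) := by
        intro j
        rw [(by rfl : j + 1 = Nat.succ j), Nat.testBit_succ]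
        by_cases hb : (b/2).testBit j <;> simp [hb] <;> ring
      rw [Finset.sum_congr rfl (fun j _ => hrw j), ← Finset.mul_sum,
        ih (b/2) (by omega) hdiv, Nat.testBit_zero]
      by_cases hb : b % 2 = 1 <;> simp [hb] <;> omega

lemma sum_testBit_one {b : ℕ} : ∀ {k : ℕ}, b < 2^k →
    ∑ j ∈ Finset.range k, (if b.testBit j then 1 else 0) = pc b := by
  induction b using Nat.strong_induction_on with
  | _ b ih =>
    intro k h
    rcases Nat.eq_zero_or_pos b with h0 | h0
    · subst h0; simp [Nat.zero_testBit, pc]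
    · have hk := k_pos_of_lt h0 h
      obtain ⟨k', rfl⟩ : ∃ k', k = k' + 1 := ⟨k - 1, by omega⟩
      rw [Finset.sum_range_succ']
      have hdiv : b/2 < 2^k' := by
        have : (2:ℕ)^(k'+1) = 2*2^k' := by rw [pow_succ]; ring
        omega
      have hrw : ∀ j, (if b.testBit (j+1) then (1:ℕ) else 0)
          = (if (b/2).testBit j then 1 else 0) := by
        intro j
        rw [(by rfl : j + 1 = Nat.succ j), Nat.testBit_succ]
      rw [Finset.sum_congr rfl (fun j _ => hrw j), ih (b/2) (by omega) hdiv,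
        Nat.testBit_zero, pc_rec h0]
      by_cases hb : b % 2 = 1 <;> simp [hb] <;> omega

lemma ms_add_pc (b : ℕ) : ms b + pc b = 2*b := by
  induction b using Nat.strong_induction_on with
  | _ b ih =>
    rcases Nat.eq_zero_or_pos b with h0 | h0
    · subst h0; simp [ms, pc]
    · have := ih (b/2) (by omega)
      rw [ms_rec h0, pc_rec h0]
      omega

lemma sum_big {b k : ℕ} (h : b < 2^k) :
    ∑ j ∈ Finset.range k, (if b.testBit j then 2^(j+1) - 1 else 0) = ms b := by
  have hsplit : ∀ j, (if b.testBit j then 2^(j+1) else 0)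
      = (if b.testBit j then 2^(j+1) - 1 else 0) + (if b.testBit j then 1 else 0) := by
    intro j
    have : (1:ℕ) ≤ 2^(j+1) := Nat.one_le_two_pow
    by_cases hb : b.testBit j <;> simp [hb] <;> omega
  have h1 := sum_testBit_pow h
  rw [Finset.sum_congr rfl (fun j _ => hsplit j), Finset.sum_add_distrib,
    sum_testBit_one h] at h1
  have := ms_add_pc b
  omega
lemma list_sum_eq (t : List ℕ) : t.sum = ∑ j ∈ Finset.range t.length, t.getD j 0 := by
  induction t with
  | nil => simp
  | cons x t ih =>
    rw [List.sum_cons, List.length_cons, Finset.sum_range_succ', ih]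
    simp [add_comm]

/-- the valid composition lists -/
def L (s n : ℕ) : Set (List ℕ) :=
  {l : List ℕ | l.sum = n ∧ 1 ≤ l.headI ∧ l.headI ≤ s ∧
    ∀ i, 1 ≤ i → i < l.length → (l.getD i 0 = s ∨ l.getD i 0 = 2 ^ i + s - 1)}

def dec (s n b : ℕ) : List ℕ :=
  (n - ms b - s * ((n - ms b - 1)/s)) ::
    (List.range ((n - ms b - 1)/s)).map (fun j => if b.testBit j then 2^(j+1) + s - 1 else s)

def enc (s : ℕ) : List ℕ → ℕ
  | [] => 0
  | x :: t => (if x = s then 0 else 1) + 2 * enc s t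

lemma enc_lt (s : ℕ) (t : List ℕ) : enc s t < 2^t.length := by
  induction t with
  | nil => simp [enc]
  | cons x t ih =>
    rw [enc, List.length_cons, pow_succ]
    by_cases hx : x = s <;> simp [hx] <;> omega

lemma enc_testBit (s : ℕ) (t : List ℕ) : ∀ j (h : j < t.length),
    (enc s t).testBit j = decide (t[j] ≠ s) := by
  induction t with
  | nil => intro j h; simp at h
  | cons x t ih =>
    intro j h
    cases j with
    | zero =>
      rw [Nat.testBit_zero, enc]
      by_cases hx : x = s <;> simp [hx] <;> omega
    | succ j =>
      rw [Nat.testBit_succ, enc]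
      have : ((if x = s then 0 else 1) + 2 * enc s t) / 2 = enc s t := by
        by_cases hx : x = s <;> simp [hx] <;> omega
      rw [this]
      simpa using ih j (by simpa using h)

section
variable {s n b : ℕ}

lemma dec_facts (hs : 1 ≤ s) (hb : phi s b < n) :
    (dec s n b).sum = n ∧ 1 ≤ (dec s n b).headI ∧ (dec s n b).headI ≤ s ∧
      (dec s n b).length = (n - ms b - 1)/s + 1 ∧ sz b ≤ (n - ms b - 1)/s ∧
      ∀ j, j < (n - ms b - 1)/s →
        (dec s n b).getD (j+1) 0 = if b.testBit j then 2^(j+1) + s - 1 else s := by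
  have h1 : ms b + s * sz b < n := hb
  obtain ⟨k, hk⟩ : ∃ k, (n - ms b - 1)/s = k := ⟨_, rfl⟩
  rw [hk]
  have hks : s * k ≤ n - ms b - 1 := by
    rw [← hk, Nat.mul_comm]; exact Nat.div_mul_le_self _ _
  have hk2 : n - ms b - 1 < s * k + s := by
    have h := Nat.div_add_mod (n - ms b - 1) s
    rw [hk] at h
    have := Nat.mod_lt (n - ms b - 1) (show 0 < s by omega)
    omega
  have hszk : sz b ≤ k := by
    rw [← hk, Nat.le_div_iff_mul_le (show 0 < s by omega), Nat.mul_comm]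
    omega
  have hblt : b < 2^k :=
    lt_of_lt_of_le (lt_two_pow_sz b) (Nat.pow_le_pow_right (by norm_num) hszk)
  have hlen : (dec s n b).length = k + 1 := by
    rw [dec, hk]; simp
  have hhead : (dec s n b).headI = n - ms b - s * k := by
    rw [dec, hk]; simp
  have hget : ∀ j, j < k →
      (dec s n b).getD (j+1) 0 = if b.testBit j then 2^(j+1) + s - 1 else s := by
    intro j hj
    rw [dec, hk, List.getD_cons_succ]
    rw [List.getD_eq_getElem _ _ (by simpa using hj)]
    simp
  have hsum : (dec s n b).sum = n := by
    rw [dec, hk, List.sum_cons]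
    have hbridge : ((List.range k).map (fun j => if b.testBit j then 2^(j+1) + s - 1 else s)).sum
        = ∑ j ∈ Finset.range k, (if b.testBit j then 2^(j+1) + s - 1 else s) := rfl
    rw [hbridge]
    have hterm : ∀ j, (if b.testBit j then 2^(j+1) + s - 1 else s)
        = s + (if b.testBit j then 2^(j+1) - 1 else 0) := by
      intro j
      have : (1:ℕ) ≤ 2^(j+1) := Nat.one_le_two_pow
      by_cases hb' : b.testBit j <;> simp [hb'] <;> omega
    rw [Finset.sum_congr rfl (fun j _ => hterm j), Finset.sum_add_distrib,
      Finset.sum_const, Finset.card_range, sum_big hblt, smul_eq_mul,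
      Nat.mul_comm k s]
    omega
  exact ⟨hsum, by rw [hhead]; omega, by rw [hhead]; omega, hlen, hszk, hget⟩

lemma dec_mapsTo (hs : 1 ≤ s) (hb : phi s b < n) : dec s n b ∈ L s n := by
  obtain ⟨h1, h2, h3, h4, h5, h6⟩ := dec_facts hs hb
  refine ⟨h1, h2, h3, ?_⟩
  intro i hi hilen
  obtain ⟨j, rfl⟩ : ∃ j, i = j + 1 := ⟨i - 1, by omega⟩
  rw [h4] at hilen
  have hj : j < (n - ms b - 1)/s := by omega
  rw [h6 j hj]
  by_cases hb' : b.testBit j <;> simp [hb']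

lemma dec_injOn (hs : 1 ≤ s) : Set.InjOn (dec s n) {b | phi s b < n} := by
  intro b1 hb1 b2 hb2 heq
  obtain ⟨_, _, _, hlen1, hsz1, hget1⟩ := dec_facts hs hb1
  obtain ⟨_, _, _, hlen2, hsz2, hget2⟩ := dec_facts hs hb2
  set k1 := (n - ms b1 - 1)/s
  set k2 := (n - ms b2 - 1)/s
  have hkk : k1 = k2 := by
    have := congrArg List.length heq
    rw [hlen1, hlen2] at this
    omega
  apply Nat.eq_of_testBit_eq
  intro j
  by_cases hj : j < k1
  · have e1 := hget1 j hj
    have e2 := hget2 j (by omega)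
    rw [heq] at e1
    rw [e1] at e2
    have hpow : (2:ℕ) ≤ 2^(j+1) := by
      calc (2:ℕ) = 2^1 := by norm_num
      _ ≤ 2^(j+1) := Nat.pow_le_pow_right (by norm_num) (by omega)
    by_cases c1 : b1.testBit j <;> by_cases c2 : b2.testBit j <;>
      simp [c1, c2] at e2 ⊢ <;> omega
  · have f1 : b1.testBit j = false :=
      Nat.testBit_lt_two_pow (lt_of_lt_of_le (lt_two_pow_sz b1)
        (Nat.pow_le_pow_right (by norm_num) (by omega)))
    have f2 : b2.testBit j = false :=
      Nat.testBit_lt_two_pow (lt_of_lt_of_le (lt_two_pow_sz b2)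
        (Nat.pow_le_pow_right (by norm_num) (by omega)))
    rw [f1, f2]

lemma dec_surjOn (hs : 1 ≤ s) : ∀ l ∈ L s n, ∃ b, phi s b < n ∧ dec s n b = l := by
  rintro l ⟨hsum, hh1, hh2, hvalid⟩
  obtain ⟨x, t, rfl⟩ : ∃ x t, l = x :: t := by
    cases l with
    | nil => simp at hh1
    | cons x t => exact ⟨x, t, rfl⟩
  rw [List.headI_cons] at hh1 hh2
  set K := t.length with hK
  refine ⟨enc s t, ?_⟩
  have hbK : enc s t < 2^K := enc_lt s t
  have hszK : sz (enc s t) ≤ K := sz_le hbK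
  have ht : ∀ j (h : j < K), t[j] = if (enc s t).testBit j then 2^(j+1) + s - 1 else s := by
    intro j h
    have hv := hvalid (j+1) (by omega) (by simp [List.length_cons]; omega)
    rw [List.getD_cons_succ, List.getD_eq_getElem _ _ (by omega)] at hv
    rw [enc_testBit s t j h]
    by_cases hc : t[j] = s
    · simp [hc]
    · simp [hc]
      rcases hv with hv | hv
      · exact absurd hv hc
      · exact hv
  have htsum : t.sum = s * K + ms (enc s t) := by
    rw [list_sum_eq t]
    have : ∀ j ∈ Finset.range K, t.getD j 0
        = s + (if (enc s t).testBit j then 2^(j+1) - 1 else 0) := by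
      intro j hj
      rw [Finset.mem_range] at hj
      rw [List.getD_eq_getElem _ _ (by omega), ht j hj]
      have : (1:ℕ) ≤ 2^(j+1) := Nat.one_le_two_pow
      by_cases hb' : (enc s t).testBit j <;> simp [hb'] <;> omega
    rw [← hK, Finset.sum_congr rfl this, Finset.sum_add_distrib, Finset.sum_const,
      Finset.card_range, sum_big hbK, smul_eq_mul]
    ring
  have hn : n = x + s * K + ms (enc s t) := by
    rw [← hsum, List.sum_cons, htsum]; ring
  have hphi : phi s (enc s t) < n := by
    have : s * sz (enc s t) ≤ s * K := Nat.mul_le_mul_left s hszK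
    unfold phi; omega
  refine ⟨hphi, ?_⟩
  have hcomm : K * s = s * K := Nat.mul_comm K s
  -- now show dec s n (enc s t) = x :: t
  have hkK : (n - ms (enc s t) - 1)/s = K := by
    have h1 : n - ms (enc s t) - 1 = (x - 1) + K * s := by omega
    rw [h1, Nat.add_mul_div_right _ _ (show 0 < s by omega),
      Nat.div_eq_of_lt (by omega)]
    omega
  rw [dec, hkK]
  have hx0 : n - ms (enc s t) - s * K = x := by omega
  rw [hx0]
  congr 1
  apply List.ext_getElem
  · simp [hK]
  · intro j hj1 hj2
    rw [List.getElem_map, List.getElem_range]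
    rw [ht j (by omega)]

lemma L_eq_image (hs : 1 ≤ s) : L s n = dec s n '' {b | phi s b < n} := by
  apply Set.eq_of_subset_of_subset
  · intro l hl
    obtain ⟨b, hb, hbl⟩ := dec_surjOn hs l hl
    exact ⟨b, hb, hbl⟩
  · rintro l ⟨b, hb, rfl⟩
    exact dec_mapsTo hs hb
end

lemma card_L {s : ℕ} (hs : 1 ≤ s) (n : ℕ) : Set.ncard (L s n) = seqA s n := by
  rw [L_eq_image hs, Set.ncard_image_of_injOn (dec_injOn hs)]
  have hset : {b | phi s b < n} = ↑(Finset.range (seqA s n)) := by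
    ext b
    simp only [Set.mem_setOf_eq, Finset.coe_range, Set.mem_Iio]
    exact lt_seqA_iff.symm
  rw [hset, Set.ncard_coe_finset, Finset.card_range]

lemma a_eq_seqA (s : ℕ) (a : ℕ → ℕ)
    (hinit : ∀ n ≤ s + 1, a n = 1) (htwo : a (s + 2) = 2)
    (hrec : ∀ n, s + 2 < n →
      a n = a (n - s - a (n - 1)) + a (n - s - 1 - a (n - 2))) :
    ∀ n, 1 ≤ n → a n = seqA s n := by
  intro n
  induction n using Nat.strong_induction_on with
  | _ n ih =>
    intro hn
    rcases (by omega : n ≤ s + 1 ∨ n = s + 2 ∨ s + 3 ≤ n) with h | h | h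
    · rw [hinit n h, seqA_init s hn h]
    · rw [h, htwo, seqA_two_val]
    · have e1 : a (n-1) = seqA s (n-1) := ih (n-1) (by omega) (by omega)
      have e2 : a (n-2) = seqA s (n-2) := ih (n-2) (by omega) (by omega)
      have harg1 : 1 ≤ n - s - seqA s (n-1) := by
        have := seqA_le (s := s) (m := n) (by omega)
        have := seqA_pos (s := s) (n := n - 1) (by omega)
        omega
      have harg2 : 1 ≤ n - s - 1 - seqA s (n-2) := by
        have h1 := seqA_le (s := s) (m := n - 1) (by omega)
        have : n - 1 - 1 = n - 2 := by omega
        rw [this] at h1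
        have := seqA_pos (s := s) (n := n - 2) (by omega)
        omega
      have hlt1 : n - s - seqA s (n-1) < n := by
        have := seqA_pos (s := s) (n := n - 1) (by omega); omega
      have hlt2 : n - s - 1 - seqA s (n-2) < n := by omega
      rw [hrec n (by omega), e1, e2,
        ih _ hlt1 harg1, ih _ hlt2 harg2, ← seqA_rec s h]

end MetaFib

/-- For s ≥ 1 and n ≥ 1, the meta-Fibonacci number a_s(n) counts the compositions
    n = x_0 + x_1 + ⋯ + x_k with x_0 ∈ {1, …, s} and x_i ∈ {s, 2^i + s - 1} for
    i ≥ 1.  Compositions are represented as lists of parts. -/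
theorem meta_fibonacci_counts_compositions (s : ℕ) (hs : 1 ≤ s) (a : ℕ → ℕ)
    (hinit : ∀ n ≤ s + 1, a n = 1) (htwo : a (s + 2) = 2)
    (hrec : ∀ n, s + 2 < n →
      a n = a (n - s - a (n - 1)) + a (n - s - 1 - a (n - 2))) :
    ∀ n, 1 ≤ n →
      a n = Set.ncard {l : List ℕ | l.sum = n ∧ 1 ≤ l.headI ∧ l.headI ≤ s ∧
        ∀ i, 1 ≤ i → i < l.length →
          (l.getD i 0 = s ∨ l.getD i 0 = 2 ^ i + s - 1)} := by
  intro n hn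
  rw [MetaFib.a_eq_seqA s a hinit htwo hrec n hn]
  exact (MetaFib.card_L hs n).symm
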